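/- Let U ⊆ ℝⁿ be open and let f : U → ℝ^{n+1} and ν : U → (ℝ^{n+1})* be differentiable maps with ν(x)(f(x)) = 1 for every x ∈ U. Then for every differentiable function μ : U → ℝ, the rescaled lift F := e^μ · f, Ψ := e^{−μ} · ν satisfies Ψ(x)(F(x)) = 1 and, for all x ∈ U and X, Y ∈ ℝⁿ, (DΨ(x)(X))(DF(x)(Y)) − (DΨ(x)(Y))(DF(x)(X)) = (Dν(x)(X))(Df(x)(Y)) − (Dν(x)(Y))(Df(x)(X)). In particular, the symplectic pairing ω̂(σ_μ⋆X, σ_μ⋆Y) of the differential of σ_μ := (F, Ψ) does not depend on μ, so one lift is φ-anti-invariant (Lagrangian) if and only if all lifts are. -/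
import Mathlib


/-- Rescaling a pair `(f, ν)` with `ν(f) = 1` by `e^μ` and `e^{−μ}` keeps
the normalization `Ψ(F) = 1` and does not change the antisymmetrized pairing of the
differentials; hence the symplectic pairing of the differential of the lift `σ_μ = (F, Ψ)`
is independent of `μ`. -/
theorem stmt_3 (n : ℕ) (hn : 1 ≤ n) (U : Set (Fin n → ℝ)) (hU : IsOpen U)
    (f : (Fin n → ℝ) → (Fin (n + 1) → ℝ))
    (ν : (Fin n → ℝ) → (Fin (n + 1) → ℝ) →L[ℝ] ℝ)
    (hf : ∀ x ∈ U, DifferentiableAt ℝ f x)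
    (hν : ∀ x ∈ U, DifferentiableAt ℝ ν x)
    (hνf : ∀ x ∈ U, ν x (f x) = 1)
    (μ : (Fin n → ℝ) → ℝ) (hμ : ∀ x ∈ U, DifferentiableAt ℝ μ x) :
    ∀ x ∈ U,
      (Real.exp (-μ x) • ν x) (Real.exp (μ x) • f x) = 1 ∧
      ∀ X Y : Fin n → ℝ,
        (fderiv ℝ (fun z => Real.exp (-μ z) • ν z) x X)
            (fderiv ℝ (fun z => Real.exp (μ z) • f z) x Y)
          - (fderiv ℝ (fun z => Real.exp (-μ z) • ν z) x Y)
            (fderiv ℝ (fun z => Real.exp (μ z) • f z) x X)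
        = (fderiv ℝ ν x X) (fderiv ℝ f x Y) - (fderiv ℝ ν x Y) (fderiv ℝ f x X) := by
  intro x hx
  have hfx := hf x hx
  have hνx := hν x hx
  have hμx := hμ x hx
  have hee : Real.exp (-μ x) * Real.exp (μ x) = 1 := by
    rw [← Real.exp_add]; simp
  constructor
  · simp [map_smul, smul_eq_mul]
    rw [hνf x hx]
    nlinarith [hee]
  · -- key : derivative of ν(f) = 1
    have hkey : ∀ X : Fin n → ℝ,
        (fderiv ℝ ν x X) (f x) + (ν x) (fderiv ℝ f x X) = 0 := by
      intro X
      have h0 : fderiv ℝ (fun z => ν z (f z)) x = 0 := by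
        have : (fun z => ν z (f z)) =ᶠ[nhds x] fun _ => (1 : ℝ) := by
          filter_upwards [hU.mem_nhds hx] with z hz using hνf z hz
        rw [this.fderiv_eq]; simp
      have h1 := fderiv_clm_apply hνx hfx
      rw [h0] at h1
      have := congrArg (fun L => L X) h1.symm
      simpa [add_comm] using this
    -- differentiability of exponentials
    have he : DifferentiableAt ℝ (fun z => Real.exp (μ z)) x := hμx.exp
    have hne : DifferentiableAt ℝ (fun z => Real.exp (-μ z)) x := hμx.neg.exp
    have hDF : fderiv ℝ (fun z => Real.exp (μ z) • f z) x
        = Real.exp (μ x) • fderiv ℝ f x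
          + (fderiv ℝ (fun z => Real.exp (μ z)) x).smulRight (f x) :=
      fderiv_smul he hfx
    have hDΨ : fderiv ℝ (fun z => Real.exp (-μ z) • ν z) x
        = Real.exp (-μ x) • fderiv ℝ ν x
          + (fderiv ℝ (fun z => Real.exp (-μ z)) x).smulRight (ν x) :=
      fderiv_smul hne hνx
    have hde : fderiv ℝ (fun z => Real.exp (μ z)) x = Real.exp (μ x) • fderiv ℝ μ x :=
      fderiv_exp hμx
    have hdne : fderiv ℝ (fun z => Real.exp (-μ z)) x
        = Real.exp (-μ x) • fderiv ℝ (fun z => -μ z) x := fderiv_exp hμx.neg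
    have hdneg : fderiv ℝ (fun z => -μ z) x = -fderiv ℝ μ x := by
      simpa using fderiv_neg (f := μ) (x := x)
    intro X Y
    rw [hDF, hDΨ, hde, hdne, hdneg]
    have hX := hkey X
    have hY := hkey Y
    have hν1 := hνf x hx
    simp only [ContinuousLinearMap.add_apply, ContinuousLinearMap.smul_apply,
      ContinuousLinearMap.smulRight_apply, ContinuousLinearMap.neg_apply, map_add,
      map_smul, smul_eq_mul, ContinuousLinearMap.map_smul, Pi.smul_apply,
      neg_mul, mul_neg, smul_neg]
    set e := Real.exp (μ x)
    set b := Real.exp (-μ x)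
    set dμX := fderiv ℝ μ x X
    set dμY := fderiv ℝ μ x Y
    set A := (fderiv ℝ ν x X) (fderiv ℝ f x Y)
    set B := (fderiv ℝ ν x Y) (fderiv ℝ f x X)
    set C := (fderiv ℝ ν x X) (f x)
    set D := (fderiv ℝ ν x Y) (f x)
    set P := (ν x) (fderiv ℝ f x X)
    set Q := (ν x) (fderiv ℝ f x Y)
    linear_combination (A - B) * hee + b*e*dμY * hX - b*e*dμX * hY
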